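/- There exists a constant C_d > 0, depending only on the dimension d, such that for every r > 0 and every β > 0 the Robin principal eigenvalue of the ball B_r satisfies λβ(B_r) ≤ C_d β / (r(1 + βr)). -/

import Mathlib

open MeasureTheory Metric Set
open scoped NNReal

noncomputable def robinEigenvalue (d : ℕ) (β : ℝ) (Ω : Set (EuclideanSpace ℝ (Fin d))) : ℝ :=
  sInf { t : ℝ | ∃ u : EuclideanSpace ℝ (Fin d) → ℝ, ContDiff ℝ 1 u ∧
    (0 < ∫ x in Ω, (u x) ^ 2) ∧
    t = ((∫ x in Ω, ‖fderiv ℝ u x‖ ^ 2) +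
          β * ∫ x in frontier Ω, (u x) ^ 2 ∂(μH[(d : ℝ) - 1])) / ∫ x in Ω, (u x) ^ 2 }

noncomputable def robinTorsion (d : ℕ) (β : ℝ) (Ω : Set (EuclideanSpace ℝ (Fin d))) : ℝ :=
  sSup { t : ℝ | ∃ u : EuclideanSpace ℝ (Fin d) → ℝ, ContDiff ℝ 1 u ∧
    (0 < (∫ x in Ω, ‖fderiv ℝ u x‖ ^ 2) +
          β * ∫ x in frontier Ω, (u x) ^ 2 ∂(μH[(d : ℝ) - 1])) ∧
    t = (∫ x in Ω, u x) ^ 2 /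
        ((∫ x in Ω, ‖fderiv ℝ u x‖ ^ 2) +
          β * ∫ x in frontier Ω, (u x) ^ 2 ∂(μH[(d : ℝ) - 1])) }

def HasLipschitzBoundary {d : ℕ} (Ω : Set (EuclideanSpace ℝ (Fin d))) : Prop :=
  ∃ hd : 0 < d, ∀ z ∈ frontier Ω, ∃ U : Set (EuclideanSpace ℝ (Fin d)),
    IsOpen U ∧ z ∈ U ∧
    ∃ (A : EuclideanSpace ℝ (Fin d) ≃ₗᵢ[ℝ] EuclideanSpace ℝ (Fin d))
      (x₀ : EuclideanSpace ℝ (Fin d)) (L : ℝ≥0)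
      (f : EuclideanSpace ℝ (Fin (d - 1)) → ℝ),
      LipschitzWith L f ∧
      Ω ∩ U = {x | f (WithLp.toLp 2 (fun j : Fin (d - 1) => A (x - x₀) (Fin.castLE (Nat.sub_le d 1) j))) <
                    A (x - x₀) ⟨d - 1, Nat.sub_lt hd Nat.one_pos⟩} ∩ U


private lemma robinEigenvalue_le_aux (d : ℕ) (β : ℝ) (hβ : 0 < β)
    (Ω : Set (EuclideanSpace ℝ (Fin d))) (u : EuclideanSpace ℝ (Fin d) → ℝ)
    (hu : ContDiff ℝ 1 u) (hpos : 0 < ∫ x in Ω, (u x) ^ 2) :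
    robinEigenvalue d β Ω ≤
      ((∫ x in Ω, ‖fderiv ℝ u x‖ ^ 2) +
        β * ∫ x in frontier Ω, (u x) ^ 2 ∂(μH[(d : ℝ) - 1])) / ∫ x in Ω, (u x) ^ 2 := by
  apply csInf_le
  · refine ⟨0, fun t ht => ?_⟩
    obtain ⟨v, hv, hpos', rfl⟩ := ht
    have h1 : 0 ≤ ∫ x in Ω, ‖fderiv ℝ v x‖ ^ 2 := integral_nonneg fun x => by positivity
    have h2 : 0 ≤ ∫ x in frontier Ω, (v x) ^ 2 ∂(μH[(d : ℝ) - 1]) :=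
      integral_nonneg fun x => sq_nonneg _
    exact div_nonneg (add_nonneg h1 (mul_nonneg hβ.le h2)) hpos'.le
  · exact ⟨u, hu, hpos, rfl⟩

set_option maxHeartbeats 1600000 in
open scoped ENNReal Pointwise in
theorem robin_eigenvalue_ball_upper_bound (d : ℕ) (hd : 2 ≤ d) :
    ∃ C : ℝ, 0 < C ∧ ∀ r β : ℝ, 0 < r → 0 < β →
      robinEigenvalue d β (ball (0 : EuclideanSpace ℝ (Fin d)) r) ≤
        C * β / (r * (1 + β * r)) := by
  haveI : NeZero d := ⟨by omega⟩
  have hd2 : (2:ℝ) ≤ (d:ℝ) := by exact_mod_cast hd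
  set Mt : ℝ := (μH[(d:ℝ)-1] (sphere (0:EuclideanSpace ℝ (Fin d)) 1)).toReal with hMt
  have hMt0 : 0 ≤ Mt := ENNReal.toReal_nonneg
  set V : ℝ := (volume (ball (0:EuclideanSpace ℝ (Fin d)) 1)).toReal with hV
  have hV0 : 0 < V :=
    ENNReal.toReal_pos (measure_ball_pos _ _ one_pos).ne' measure_ball_lt_top.ne
  have h2d : (0:ℝ) < 2^d := by positivity
  refine ⟨2 * Mt / V + 2^d * 1024 + 1, by positivity, ?_⟩
  intro r β hr hβ
  -- volume scaling
  have hvol : ∀ s : ℝ, 0 < s →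
      (volume (ball (0:EuclideanSpace ℝ (Fin d)) s)).toReal = s ^ d * V := by
    intro s hs
    rw [Measure.addHaar_ball_of_pos (volume : Measure (EuclideanSpace ℝ (Fin d))) (0:EuclideanSpace ℝ (Fin d)) hs,
      finrank_euclideanSpace_fin, ENNReal.toReal_mul, ENNReal.toReal_ofReal (by positivity), hV]
  have hvolr := hvol r hr
  -- sphere Hausdorff measure scaling
  have hsph : (μH[(d:ℝ)-1] (sphere (0:EuclideanSpace ℝ (Fin d)) r)).toReal = r ^ d / r * Mt := by
    have h3 : sphere (0:EuclideanSpace ℝ (Fin d)) r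
        = r • sphere (0:EuclideanSpace ℝ (Fin d)) 1 := by
      rw [smul_sphere r (0:EuclideanSpace ℝ (Fin d)) zero_le_one]
      simp [abs_of_pos hr]
    rw [h3, MeasureTheory.Measure.hausdorffMeasure_smul₀ (by linarith) hr.ne' _]
    rw [ENNReal.smul_def, smul_eq_mul, ENNReal.toReal_mul, ENNReal.coe_toReal,
      NNReal.coe_rpow, coe_nnnorm, Real.norm_eq_abs, abs_of_pos hr,
      Real.rpow_sub hr, Real.rpow_one, Real.rpow_natCast, hMt]
  rcases le_or_gt (β * r) 1 with hβr | hβr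
  · -- small βr : constant test function
    have hden : (∫ x in ball (0:EuclideanSpace ℝ (Fin d)) r, ((fun _ => (1:ℝ)) x) ^ 2)
        = (volume (ball (0:EuclideanSpace ℝ (Fin d)) r)).toReal := by simp [measureReal_def]
    have hdenpos : 0 < ∫ x in ball (0:EuclideanSpace ℝ (Fin d)) r, ((fun _ => (1:ℝ)) x) ^ 2 := by
      rw [hden, hvolr]
      exact mul_pos (by positivity) hV0
    have hnum : (∫ x in ball (0:EuclideanSpace ℝ (Fin d)) r,
        ‖fderiv ℝ (fun _ => (1:ℝ)) x‖ ^ 2) = 0 := by simp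
    have hbdy : (∫ x in frontier (ball (0:EuclideanSpace ℝ (Fin d)) r),
          ((fun _ => (1:ℝ)) x) ^ 2 ∂(μH[(d:ℝ)-1]))
        = (μH[(d:ℝ)-1] (sphere (0:EuclideanSpace ℝ (Fin d)) r)).toReal := by
      rw [frontier_ball 0 hr.ne']; simp [measureReal_def]
    have hle := robinEigenvalue_le_aux d β hβ (ball (0:EuclideanSpace ℝ (Fin d)) r)
      (fun _ => (1:ℝ)) contDiff_const hdenpos
    rw [hnum, hbdy, hden, hsph, hvolr] at hle
    refine hle.trans ?_
    have hRd : (0:ℝ) < r ^ d := by positivity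
    have heq : (0 + β * (r ^ d / r * Mt)) / (r ^ d * V) = β * Mt / (r * V) := by
      field_simp; ring
    rw [heq, div_le_div_iff₀ (by positivity) (mul_pos hr (by nlinarith))]
    have key1 : 2*Mt/V*(β*(r*V)) = 2*Mt*(β*r) := by field_simp
    nlinarith [mul_nonneg (mul_nonneg (mul_nonneg hMt0 hβ.le) hr.le)
        (by linarith : (0:ℝ) ≤ 1 - β*r),
      mul_nonneg (by positivity : (0:ℝ) ≤ 2^d*1024 + 1)
        (mul_nonneg hβ.le (mul_nonneg hr.le hV0.le))]
  · -- large βr : quadratic test function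
    set u : EuclideanSpace ℝ (Fin d) → ℝ := fun x => r^2 - ‖x‖^2 with hu
    have hcd : ContDiff ℝ 1 u := contDiff_const.sub (contDiff_norm_sq ℝ)
    have hfd : ∀ x : EuclideanSpace ℝ (Fin d), ‖fderiv ℝ u x‖ = 2 * ‖x‖ := by
      intro x
      have h : HasFDerivAt u (-(2 • innerSL ℝ x)) x := by
        have h0 := (hasFDerivAt_const (r^2) x).sub (hasStrictFDerivAt_norm_sq x).hasFDerivAt
        rw [zero_sub] at h0; exact h0
      rw [h.fderiv, norm_neg]
      have h2 : (2:ℕ) • innerSL ℝ x = (2:ℝ) • innerSL ℝ x := by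
        ext y; simp [two_smul]
      rw [h2, norm_smul]
      simp [innerSL_apply_norm]
    have hsq : (fun x : EuclideanSpace ℝ (Fin d) => ‖fderiv ℝ u x‖ ^ 2)
        = fun x => 4 * ‖x‖^2 := by
      funext x; rw [hfd x]; ring
    have hic : IntegrableOn (fun x : EuclideanSpace ℝ (Fin d) => ‖fderiv ℝ u x‖ ^ 2)
        (ball 0 r) volume := by
      rw [hsq]
      exact ((continuous_const.mul ((continuous_norm).pow 2)).continuousOn.integrableOn_compact
        (isCompact_closedBall 0 r)).mono_set ball_subset_closedBall
    have hiu : IntegrableOn (fun x : EuclideanSpace ℝ (Fin d) => u x ^ 2) (ball 0 r) volume :=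
      ((hcd.continuous.pow 2).continuousOn.integrableOn_compact
        (isCompact_closedBall 0 r)).mono_set ball_subset_closedBall
    have hnum : (∫ x in ball (0:EuclideanSpace ℝ (Fin d)) r, ‖fderiv ℝ u x‖ ^ 2)
        ≤ 4*r^2 * (r ^ d * V) := by
      rw [← hvolr]
      have hmono := setIntegral_mono_on (g := fun _ : EuclideanSpace ℝ (Fin d) => 4*r^2) hic
        (integrableOn_const measure_ball_lt_top.ne) measurableSet_ball (fun x hx => ?_)
      · calc (∫ x in ball (0:EuclideanSpace ℝ (Fin d)) r, ‖fderiv ℝ u x‖ ^ 2)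
            ≤ ∫ _ in ball (0:EuclideanSpace ℝ (Fin d)) r, 4*r^2 := hmono
          _ = 4*r^2 * (volume (ball (0:EuclideanSpace ℝ (Fin d)) r)).toReal := by
              rw [setIntegral_const, smul_eq_mul, mul_comm, measureReal_def]
      · have hx' : ‖x‖ ≤ r := (mem_ball_zero_iff.1 hx).le
        show ‖fderiv ℝ u x‖ ^ 2 ≤ 4*r^2
        rw [hfd x]
        nlinarith [norm_nonneg x]
    have hbdy : (∫ x in frontier (ball (0:EuclideanSpace ℝ (Fin d)) r),
        (u x) ^ 2 ∂(μH[(d:ℝ)-1])) = 0 := by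
      rw [frontier_ball 0 hr.ne']
      have heq : EqOn (fun x : EuclideanSpace ℝ (Fin d) => u x ^ 2) (fun _ => (0:ℝ))
          (sphere 0 r) := by
        intro x hx
        have hxr : ‖x‖ = r := by simpa using hx
        simp [hu, hxr]
      rw [setIntegral_congr_fun (isClosed_sphere.measurableSet) heq]
      simp
    have hden : (3/4*r^2)^2 * ((r/2) ^ d * V)
        ≤ ∫ x in ball (0:EuclideanSpace ℝ (Fin d)) r, u x ^ 2 := by
      rw [← hvol (r/2) (by linarith)]
      have h1 : (3/4*r^2)^2 * (volume (ball (0:EuclideanSpace ℝ (Fin d)) (r/2))).toReal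
          ≤ ∫ x in ball (0:EuclideanSpace ℝ (Fin d)) (r/2), u x ^ 2 := by
        have hint : IntegrableOn (fun x : EuclideanSpace ℝ (Fin d) => u x ^ 2)
            (ball 0 (r/2)) volume := hiu.mono_set (ball_subset_ball (by linarith))
        have hmono := setIntegral_mono_on (f := fun _ : EuclideanSpace ℝ (Fin d) => (3/4*r^2)^2)
          (integrableOn_const measure_ball_lt_top.ne) hint
          measurableSet_ball (fun x hx => ?_)
        · calc (3/4*r^2)^2 * (volume (ball (0:EuclideanSpace ℝ (Fin d)) (r/2))).toReal
              = ∫ _ in ball (0:EuclideanSpace ℝ (Fin d)) (r/2), (3/4*r^2)^2 := by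
                rw [setIntegral_const, smul_eq_mul, mul_comm, measureReal_def]
            _ ≤ _ := hmono
        · have hx' : ‖x‖ < r/2 := mem_ball_zero_iff.1 hx
          have h34 : 3/4*r^2 ≤ u x := by
            show 3/4*r^2 ≤ r^2 - ‖x‖^2
            nlinarith [norm_nonneg x]
          show (3/4*r^2)^2 ≤ u x ^ 2
          nlinarith [norm_nonneg x]
      refine h1.trans (setIntegral_mono_set hiu (ae_of_all _ fun x => sq_nonneg _) ?_)
      exact HasSubset.Subset.eventuallyLE (ball_subset_ball (by linarith))
    have hdl : (0:ℝ) < (3/4*r^2)^2 * ((r/2) ^ d * V) :=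
      mul_pos (by positivity) (mul_pos (by positivity) hV0)
    have hdenpos : 0 < ∫ x in ball (0:EuclideanSpace ℝ (Fin d)) r, u x ^ 2 :=
      lt_of_lt_of_le hdl hden
    have hle := robinEigenvalue_le_aux d β hβ (ball (0:EuclideanSpace ℝ (Fin d)) r) u hcd hdenpos
    rw [hbdy, mul_zero, add_zero] at hle
    refine hle.trans ?_
    have hq : 4*r^2*(r^d*V) / ((3/4*r^2)^2*((r/2)^d*V)) = 64*2^d/(9*r^2) := by
      rw [div_pow]
      field_simp
      ring
    have hstep : (∫ x in ball (0:EuclideanSpace ℝ (Fin d)) r, ‖fderiv ℝ u x‖ ^ 2)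
          / (∫ x in ball (0:EuclideanSpace ℝ (Fin d)) r, u x ^ 2)
        ≤ 64*2^d/(9*r^2) := by
      rw [← hq]
      exact div_le_div₀ (by positivity) hnum hdl hden
    refine hstep.trans ?_
    rw [div_le_div_iff₀ (by positivity) (mul_pos hr (by nlinarith))]
    have hA : 0 ≤ 2 * Mt / V := by positivity
    have hrb : 0 ≤ β*r^2 - r := by nlinarith
    nlinarith [mul_nonneg h2d.le hrb, mul_nonneg hA (by positivity : (0:ℝ) ≤ β*(9*r^2)),
      mul_nonneg (mul_nonneg h2d.le hβ.le) (mul_nonneg hr.le hr.le)]
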